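/- Under the perturbed basic Cholesky-QR model, if κ(A)²γ₂ < 1, where γ₁ ≡ (1+ε_A)²(ε₁ + (1+ε₁)ε₂ + 2ε₃ + ε₃²) and γ₂ ≡ 2ε_A + ε_A² + (1+ε_A)²(ε₁ + (1+ε₁)ε₂), and if Ĝ + E₂ = R̂ᵀR̂ with R̂ ∈ ℝ^{n×n} and Q̂R̂ = (A+E) + E₃, then ‖Iₙ − Q̂ᵀQ̂‖₂ ≤ κ(A)²γ₁ / (1 − κ(A)²γ₂). -/

import Mathlib

open Matrix

/-- Spectral (two-)norm of a real matrix. -/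
noncomputable def spec {m n : ℕ} (M : Matrix (Fin m) (Fin n) ℝ) : ℝ :=
  ‖LinearMap.toContinuousLinearMap (Matrix.toEuclideanLin M)‖

/-- Singular values of a real `m × n` matrix, in decreasing order:
`singularValues M i` is `σ_{i+1}(M)` (0-based). -/
noncomputable def singularValues {m n : ℕ} (M : Matrix (Fin m) (Fin n) ℝ) : Fin n → ℝ :=
  fun i =>
    Real.sqrt (((show (Mᵀ * M).IsHermitian by simpa using Matrix.isHermitian_conjTranspose_mul_self M).eigenvalues ∘
      ⇑(Tuple.sort (show (Mᵀ * M).IsHermitian by simpa using Matrix.isHermitian_conjTranspose_mul_self M).eigenvalues)) i.rev)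

/-- Two-norm condition number `κ(M) = σ₁(M)/σₙ(M)`. -/
noncomputable def kappa {m n : ℕ} (M : Matrix (Fin m) (Fin n) ℝ) : ℝ :=
  if h : 0 < n then
    singularValues M ⟨0, h⟩ / singularValues M ⟨n - 1, Nat.sub_lt h Nat.one_pos⟩
  else 1

/-- Smallest singular value `σₙ(M)`. -/
noncomputable def sigmaMin {m n : ℕ} (M : Matrix (Fin m) (Fin n) ℝ) : ℝ :=
  if h : 0 < n then singularValues M ⟨n - 1, Nat.sub_lt h Nat.one_pos⟩ else 1

/-- Eigenvalues of a real symmetric matrix in decreasing order: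
`symmEigs M j` is `λ_{j+1}(M)` (0-based). -/
noncomputable def symmEigs {n : ℕ} (M : Matrix (Fin n) (Fin n) ℝ) : Fin n → ℝ :=
  fun j =>
    if h : M.IsHermitian then (h.eigenvalues ∘ ⇑(Tuple.sort h.eigenvalues)) j.rev else 0
open scoped Matrix.Norms.L2Operator

lemma Matrix.isHermitian_transpose_mul_self {m n : ℕ} (M : Matrix (Fin m) (Fin n) ℝ) :
    (Mᵀ * M).IsHermitian := by
  simpa using Matrix.isHermitian_conjTranspose_mul_self M

lemma spec_eq {m n : ℕ} (M : Matrix (Fin m) (Fin n) ℝ) : spec M = ‖M‖ := rfl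

lemma spec_nonneg {m n : ℕ} (M : Matrix (Fin m) (Fin n) ℝ) : 0 ≤ spec M := by
  rw [spec_eq]; exact norm_nonneg _

lemma spec_add_le {m n : ℕ} (M N : Matrix (Fin m) (Fin n) ℝ) :
    spec (M + N) ≤ spec M + spec N := by
  simp only [spec_eq]; exact norm_add_le _ _

lemma spec_mul_le {m n k : ℕ} (M : Matrix (Fin m) (Fin n) ℝ) (N : Matrix (Fin n) (Fin k) ℝ) :
    spec (M * N) ≤ spec M * spec N := by
  simp only [spec_eq]; exact Matrix.l2_opNorm_mul M N

lemma spec_transpose {m n : ℕ} (M : Matrix (Fin m) (Fin n) ℝ) : spec Mᵀ = spec M := by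
  simp only [spec_eq]
  rw [← Matrix.conjTranspose_eq_transpose_of_trivial]
  exact Matrix.l2_opNorm_conjTranspose M

lemma spec_transpose_mul_self {m n : ℕ} (M : Matrix (Fin m) (Fin n) ℝ) :
    spec (Mᵀ * M) = spec M ^ 2 := by
  simp only [spec_eq]
  rw [← Matrix.conjTranspose_eq_transpose_of_trivial, sq]
  exact Matrix.l2_opNorm_conjTranspose_mul_self M

lemma spec_neg {m n : ℕ} (M : Matrix (Fin m) (Fin n) ℝ) : spec (-M) = spec M := by
  simp only [spec_eq]; exact norm_neg _

/-- matrix-vector product landing in Euclidean space -/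
noncomputable def mv {m n : ℕ} (M : Matrix (Fin m) (Fin n) ℝ) (x : EuclideanSpace ℝ (Fin n)) :
    EuclideanSpace ℝ (Fin m) :=
  (EuclideanSpace.equiv (Fin m) ℝ).symm (M *ᵥ (EuclideanSpace.equiv (Fin n) ℝ x))

lemma spec_mulVec_le {m n : ℕ} (M : Matrix (Fin m) (Fin n) ℝ) (x : EuclideanSpace ℝ (Fin n)) :
    ‖mv M x‖ ≤ spec M * ‖x‖ := by
  rw [spec_eq]; exact Matrix.l2_opNorm_mulVec M x

lemma spec_le_bound {m n : ℕ} (M : Matrix (Fin m) (Fin n) ℝ) {c : ℝ} (hc : 0 ≤ c)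
    (h : ∀ x : EuclideanSpace ℝ (Fin n), ‖mv M x‖ ≤ c * ‖x‖) :
    spec M ≤ c := by
  apply ContinuousLinearMap.opNorm_le_bound _ hc
  intro x
  simpa [Matrix.toEuclideanLin_apply, mv, PiLp.coe_continuousLinearEquiv] using h x

section Eigen

variable {n : ℕ} {H : Matrix (Fin n) (Fin n) ℝ} (hH : H.IsHermitian)

lemma real_spectral : H = (hH.eigenvectorUnitary : Matrix (Fin n) (Fin n) ℝ) *
    Matrix.diagonal hH.eigenvalues * (hH.eigenvectorUnitary : Matrix (Fin n) (Fin n) ℝ)ᵀ := by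
  have h := hH.spectral_theorem
  have : RCLike.ofReal ∘ hH.eigenvalues = hH.eigenvalues := by
    funext j; simp
  rw [this] at h
  rw [← Matrix.conjTranspose_eq_transpose_of_trivial, ← Matrix.star_eq_conjTranspose]
  exact h

lemma dot_mulVec_eq (x : Fin n → ℝ) :
    dotProduct x (H *ᵥ x) =
      ∑ j, hH.eigenvalues j *
        (((hH.eigenvectorUnitary : Matrix (Fin n) (Fin n) ℝ)ᵀ *ᵥ x) j) ^ 2 := by
  set U := (hH.eigenvectorUnitary : Matrix (Fin n) (Fin n) ℝ) with hU
  set w : Fin n → ℝ := Uᵀ *ᵥ x with hw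
  have hw2 : w = x ᵥ* U := Matrix.mulVec_transpose U x
  have h1 : H *ᵥ x = U *ᵥ (Matrix.diagonal hH.eigenvalues *ᵥ w) := by
    rw [hw, Matrix.mulVec_mulVec, Matrix.mulVec_mulVec, ← real_spectral hH]
  rw [h1, Matrix.dotProduct_mulVec x U, ← hw2]
  have : ∀ j, (Matrix.diagonal hH.eigenvalues *ᵥ w) j = hH.eigenvalues j * w j :=
    fun j => Matrix.mulVec_diagonal _ _ _
  simp only [dotProduct]
  exact Finset.sum_congr rfl fun j _ => by rw [this j]; ring

lemma dot_self_eq (x : Fin n → ℝ) :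
    dotProduct x x =
      ∑ j, (((hH.eigenvectorUnitary : Matrix (Fin n) (Fin n) ℝ)ᵀ *ᵥ x) j) ^ 2 := by
  set U := (hH.eigenvectorUnitary : Matrix (Fin n) (Fin n) ℝ) with hU
  have hUU : U * Uᵀ = 1 := by
    have := Matrix.mem_unitaryGroup_iff.mp hH.eigenvectorUnitary.2
    rwa [Matrix.star_eq_conjTranspose, Matrix.conjTranspose_eq_transpose_of_trivial] at this
  have h2 : dotProduct (Uᵀ *ᵥ x) (Uᵀ *ᵥ x) = dotProduct x x := by
    rw [Matrix.dotProduct_mulVec (Uᵀ *ᵥ x) Uᵀ x, Matrix.vecMul_transpose U (Uᵀ *ᵥ x),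
      Matrix.mulVec_mulVec, hUU, Matrix.one_mulVec]
  rw [← h2]
  simp [dotProduct, sq]

lemma mulVec_dot_mulVec_eq (x : Fin n → ℝ) :
    dotProduct (H *ᵥ x) (H *ᵥ x) =
      ∑ j, (hH.eigenvalues j) ^ 2 *
        (((hH.eigenvectorUnitary : Matrix (Fin n) (Fin n) ℝ)ᵀ *ᵥ x) j) ^ 2 := by
  set U := (hH.eigenvectorUnitary : Matrix (Fin n) (Fin n) ℝ) with hU
  have hUU' : Uᵀ * U = 1 := by
    have := Matrix.mem_unitaryGroup_iff'.mp hH.eigenvectorUnitary.2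
    rwa [Matrix.star_eq_conjTranspose, Matrix.conjTranspose_eq_transpose_of_trivial] at this
  have hmul : Uᵀ * H = Matrix.diagonal hH.eigenvalues * Uᵀ := by
    conv_lhs => rw [real_spectral hH]
    rw [← Matrix.mul_assoc, ← Matrix.mul_assoc, hUU', Matrix.one_mul]
  have key : Uᵀ *ᵥ (H *ᵥ x) = fun j => hH.eigenvalues j * ((Uᵀ *ᵥ x) j) := by
    rw [Matrix.mulVec_mulVec, hmul, ← Matrix.mulVec_mulVec]
    funext j
    exact Matrix.mulVec_diagonal _ _ _
  rw [dot_self_eq hH (H *ᵥ x), ← hU, key]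
  exact Finset.sum_congr rfl fun j _ => by ring

end Eigen

section Derived

variable {n : ℕ}

lemma norm_sq_eucl (x : EuclideanSpace ℝ (Fin n)) :
    ‖x‖ ^ 2 = dotProduct (EuclideanSpace.equiv (Fin n) ℝ x) (EuclideanSpace.equiv (Fin n) ℝ x) := by
  rw [EuclideanSpace.norm_eq, Real.sq_sqrt (by positivity)]
  simp [dotProduct, sq, Real.norm_eq_abs, abs_mul_abs_self]

lemma mv_norm_sq {m : ℕ} (M : Matrix (Fin m) (Fin n) ℝ) (x : EuclideanSpace ℝ (Fin n)) :
    ‖mv M x‖ ^ 2 = dotProduct (EuclideanSpace.equiv (Fin n) ℝ x)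
      ((Mᵀ * M) *ᵥ (EuclideanSpace.equiv (Fin n) ℝ x)) := by
  rw [norm_sq_eucl]
  set y := EuclideanSpace.equiv (Fin n) ℝ x
  show dotProduct (M *ᵥ y) (M *ᵥ y) = dotProduct y ((Mᵀ * M) *ᵥ y)
  rw [← Matrix.mulVec_mulVec, Matrix.dotProduct_mulVec y Mᵀ, Matrix.vecMul_transpose]

variable {H : Matrix (Fin n) (Fin n) ℝ} (hH : H.IsHermitian)

lemma abs_eigenvalue_le_spec (j : Fin n) : |hH.eigenvalues j| ≤ spec H := by
  set v := hH.eigenvectorBasis j with hv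
  have hnv : ‖v‖ = 1 := hH.eigenvectorBasis.orthonormal.1 j
  have hmv : mv H v = hH.eigenvalues j • v := by
    apply (EuclideanSpace.equiv (Fin n) ℝ).injective
    funext i
    have := congrFun (hH.mulVec_eigenvectorBasis j) i
    simpa [mv, PiLp.coe_continuousLinearEquiv] using this
  have h1 : ‖mv H v‖ = |hH.eigenvalues j| := by
    rw [hmv, norm_smul, hnv, mul_one, Real.norm_eq_abs]
  have := spec_mulVec_le H v
  rwa [h1, hnv, mul_one] at this

lemma rayleigh_lower {c : ℝ} (h : ∀ j, c ≤ hH.eigenvalues j) (x : Fin n → ℝ) :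
    c * dotProduct x x ≤ dotProduct x (H *ᵥ x) := by
  rw [dot_mulVec_eq hH x, dot_self_eq hH x, Finset.mul_sum]
  apply Finset.sum_le_sum
  intro j _
  exact mul_le_mul_of_nonneg_right (h j) (sq_nonneg _)

lemma spec_le_of_abs_eig_le {C : ℝ} (hC : 0 ≤ C) (h : ∀ j, |hH.eigenvalues j| ≤ C) :
    spec H ≤ C := by
  apply spec_le_bound H hC
  intro x
  have h2 : ‖mv H x‖ ^ 2 ≤ (C * ‖x‖) ^ 2 := by
    have e1 : ‖mv H x‖ ^ 2 = dotProduct (EuclideanSpace.equiv (Fin n) ℝ x)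
        ((Hᵀ * H) *ᵥ (EuclideanSpace.equiv (Fin n) ℝ x)) := mv_norm_sq H x
    set y := EuclideanSpace.equiv (Fin n) ℝ x with hy
    have hHt : Hᵀ * H = H * H := by
      have : Hᵀ = H := by
        have := hH
        rwa [Matrix.IsHermitian, Matrix.conjTranspose_eq_transpose_of_trivial] at this
      rw [this]
    have e2 : dotProduct y ((H * H) *ᵥ y) = dotProduct (H *ᵥ y) (H *ᵥ y) := by
      have : Hᵀ = H := by
        have := hH
        rwa [Matrix.IsHermitian, Matrix.conjTranspose_eq_transpose_of_trivial] at this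
      rw [← Matrix.mulVec_mulVec, Matrix.dotProduct_mulVec y H]
      conv_lhs => rw [← this, Matrix.vecMul_transpose, this]
    rw [e1, hHt, e2, mulVec_dot_mulVec_eq hH y, mul_pow, norm_sq_eucl, ← hy,
      dot_self_eq hH y, Finset.mul_sum]
    apply Finset.sum_le_sum
    intro j _
    apply mul_le_mul_of_nonneg_right _ (sq_nonneg _)
    rw [← sq_abs]
    exact pow_le_pow_left₀ (abs_nonneg _) (h j) 2
  have := pow_le_pow_iff_left₀ (norm_nonneg (mv H x)) (by positivity : (0:ℝ) ≤ C * ‖x‖) (two_ne_zero)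
  exact this.mp h2

end Derived

section SortFacts

variable {n : ℕ}

lemma sorted_min_le (f : Fin n → ℝ) (h : 0 < n) (j : Fin n) :
    (f ∘ ⇑(Tuple.sort f)) ⟨0, h⟩ ≤ f j := by
  obtain ⟨i, hi⟩ : ∃ i, Tuple.sort f i = j := ⟨(Tuple.sort f).symm j, Equiv.apply_symm_apply _ _⟩
  have : (f ∘ ⇑(Tuple.sort f)) ⟨0, h⟩ ≤ (f ∘ ⇑(Tuple.sort f)) i :=
    Tuple.monotone_sort f (by exact Fin.mk_le_of_le_val (Nat.zero_le _))
  simpa [hi] using this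

lemma le_sorted_max (f : Fin n → ℝ) (h : 0 < n) (j : Fin n) :
    f j ≤ (f ∘ ⇑(Tuple.sort f)) ⟨n - 1, Nat.sub_lt h Nat.one_pos⟩ := by
  obtain ⟨i, hi⟩ : ∃ i, Tuple.sort f i = j := ⟨(Tuple.sort f).symm j, Equiv.apply_symm_apply _ _⟩
  have : (f ∘ ⇑(Tuple.sort f)) i ≤ (f ∘ ⇑(Tuple.sort f)) ⟨n - 1, Nat.sub_lt h Nat.one_pos⟩ :=
    Tuple.monotone_sort f (by
      simp only [Fin.le_def]
      exact Nat.le_sub_one_of_lt i.isLt)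
  simpa [hi] using this

end SortFacts

section PosDefRank

lemma posDef_transpose_mul_self {m n : ℕ} (A : Matrix (Fin m) (Fin n) ℝ) (hA : A.rank = n) :
    (Aᵀ * A).PosDef := by
  refine Matrix.PosDef.of_dotProduct_mulVec_pos (Matrix.isHermitian_transpose_mul_self A) fun x hx => ?_
  have hker : LinearMap.ker A.mulVecLin = ⊥ := by
    have h1 := LinearMap.finrank_range_add_finrank_ker A.mulVecLin
    rw [Module.finrank_pi] at h1
    have h2 : Module.finrank ℝ (LinearMap.range A.mulVecLin) = n := hA
    rw [h2] at h1
    have h3 : Module.finrank ℝ (LinearMap.ker A.mulVecLin) = 0 := by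
      simpa using h1
    exact Submodule.finrank_eq_zero.mp h3
  have hAx : A *ᵥ x ≠ 0 := by
    intro hz
    apply hx
    have : x ∈ LinearMap.ker A.mulVecLin := hz
    rwa [hker, Submodule.mem_bot] at this
  have : dotProduct (star x) ((Aᵀ * A) *ᵥ x) = dotProduct (A *ᵥ x) (A *ᵥ x) := by
    have hsx : star x = x := by funext i; simp
    rw [hsx, ← Matrix.mulVec_mulVec, Matrix.dotProduct_mulVec x Aᵀ, Matrix.vecMul_transpose]
  rw [this]
  have h4 : dotProduct (A *ᵥ x) (A *ᵥ x) ≠ 0 := fun hc => hAx (dotProduct_self_eq_zero.mp hc)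
  have h5 : 0 ≤ dotProduct (A *ᵥ x) (A *ᵥ x) := Finset.sum_nonneg fun i _ => mul_self_nonneg _
  exact lt_of_le_of_ne h5 (Ne.symm h4)

end PosDefRank


section SV

variable {m n : ℕ} (A : Matrix (Fin m) (Fin n) ℝ)

lemma ata_eigs_nonneg (j : Fin n) :
    0 ≤ (Matrix.isHermitian_transpose_mul_self A).eigenvalues j := by
  have hps : (Aᵀ * A).PosSemidef := by
    have := Matrix.posSemidef_conjTranspose_mul_self A
    rwa [Matrix.conjTranspose_eq_transpose_of_trivial] at this
  exact hps.eigenvalues_nonneg j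

lemma rev_zero_eq (h : 0 < n) : (⟨0, h⟩ : Fin n).rev = ⟨n - 1, Nat.sub_lt h Nat.one_pos⟩ := by
  ext; simp [Fin.val_rev]

lemma rev_last_eq (h : 0 < n) : (⟨n - 1, Nat.sub_lt h Nat.one_pos⟩ : Fin n).rev = ⟨0, h⟩ := by
  ext; simp [Fin.val_rev]; omega

lemma sigmaMin_sq (h : 0 < n) :
    sigmaMin A ^ 2 = ((Matrix.isHermitian_transpose_mul_self A).eigenvalues ∘
      ⇑(Tuple.sort (Matrix.isHermitian_transpose_mul_self A).eigenvalues)) ⟨0, h⟩ := by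
  rw [sigmaMin, dif_pos h, singularValues, rev_last_eq h]
  exact Real.sq_sqrt (by
    exact ata_eigs_nonneg A _)

lemma sigmaMin_sq_le_eig (h : 0 < n) (j : Fin n) :
    sigmaMin A ^ 2 ≤ (Matrix.isHermitian_transpose_mul_self A).eigenvalues j := by
  rw [sigmaMin_sq A h]
  exact sorted_min_le _ h j

lemma spec_eq_sv_max (h : 0 < n) : spec A = singularValues A ⟨0, h⟩ := by
  have hμ := ata_eigs_nonneg A
  set μ := (Matrix.isHermitian_transpose_mul_self A).eigenvalues with hμdef
  set Λ : ℝ := (μ ∘ ⇑(Tuple.sort μ)) ⟨n - 1, Nat.sub_lt h Nat.one_pos⟩ with hΛ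
  have hΛ0 : 0 ≤ Λ := hμ _
  have hspec_sq : spec A ^ 2 = Λ := by
    have hub : spec (Aᵀ * A) ≤ Λ := by
      apply spec_le_of_abs_eig_le (Matrix.isHermitian_transpose_mul_self A) hΛ0
      intro j
      rw [abs_of_nonneg (hμ j)]
      exact le_sorted_max μ h j
    have hlb : Λ ≤ spec (Aᵀ * A) := by
      have := abs_eigenvalue_le_spec (Matrix.isHermitian_transpose_mul_self A)
        (Tuple.sort μ ⟨n - 1, Nat.sub_lt h Nat.one_pos⟩)
      rwa [abs_of_nonneg (hμ _)] at this
    rw [← spec_transpose_mul_self A]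
    exact le_antisymm hub hlb
  rw [singularValues, rev_zero_eq h, ← hμdef, ← hΛ, ← hspec_sq, Real.sqrt_sq (spec_nonneg A)]

lemma kappa_eq (h : 0 < n) : kappa A = spec A / sigmaMin A := by
  rw [kappa, dif_pos h, sigmaMin, dif_pos h, spec_eq_sv_max A h]

lemma sigmaMin_pos (h : 0 < n) (hA : A.rank = n) : 0 < sigmaMin A := by
  have hpd := posDef_transpose_mul_self A hA
  have hpos : 0 < (Matrix.isHermitian_transpose_mul_self A).eigenvalues
      (Tuple.sort (Matrix.isHermitian_transpose_mul_self A).eigenvalues ⟨0, h⟩) :=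
    hpd.eigenvalues_pos _
  rw [sigmaMin, dif_pos h, singularValues, rev_last_eq h]
  exact Real.sqrt_pos.mpr hpos

lemma sigmaMin_le_spec (h : 0 < n) : sigmaMin A ≤ spec A := by
  rw [spec_eq_sv_max A h, sigmaMin, dif_pos h, singularValues, singularValues,
    rev_zero_eq h, rev_last_eq h]
  apply Real.sqrt_le_sqrt
  exact (sorted_min_le _ h ⟨0, h⟩).trans (le_sorted_max _ h ⟨0, h⟩)

end SV

lemma abs_dot_mulVec_le {n : ℕ} (M : Matrix (Fin n) (Fin n) ℝ) (x : Fin n → ℝ) :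
    |dotProduct x (M *ᵥ x)| ≤ spec M * dotProduct x x := by
  set x' : EuclideanSpace ℝ (Fin n) := (EuclideanSpace.equiv (Fin n) ℝ).symm x with hx'
  have h1 : dotProduct x (M *ᵥ x) = inner ℝ x' (mv M x') := by
    simp only [PiLp.inner_apply, mv, dotProduct, RCLike.inner_apply, conj_trivial]
    exact Finset.sum_congr rfl fun i _ => mul_comm _ _
  rw [h1]
  calc |inner ℝ x' (mv M x')| ≤ ‖x'‖ * ‖mv M x'‖ := abs_real_inner_le_norm _ _
    _ ≤ ‖x'‖ * (spec M * ‖x'‖) := by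
        exact mul_le_mul_of_nonneg_left (spec_mulVec_le M x') (norm_nonneg _)
    _ = spec M * (‖x'‖ ^ 2) := by ring
    _ = spec M * dotProduct x x := by rw [norm_sq_eucl]; rfl


set_option maxHeartbeats 8000000 in
/-- Theorem 2.2, deviation from orthonormality. -/
theorem stmt_4 {m n : ℕ} (A E E₃ Qhat : Matrix (Fin m) (Fin n) ℝ)
    (E₁ E₂ Ghat Rhat : Matrix (Fin n) (Fin n) ℝ)
    (hA : A.rank = n) (hE₁ : E₁ᵀ = E₁) (hE₂ : E₂ᵀ = E₂)
    (hG : Ghat = (A + E)ᵀ * (A + E) + E₁)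
    (εA ε₁ ε₂ ε₃ γ₁ γ₂ : ℝ)
    (hεA : εA = spec E / spec A)
    (hε₁ : ε₁ = spec E₁ / spec (A + E) ^ 2)
    (hε₂ : ε₂ = spec E₂ / spec Ghat)
    (hε₃ : ε₃ = spec E₃ / spec (A + E))
    (hγ₁ : γ₁ = (1 + εA) ^ 2 * (ε₁ + (1 + ε₁) * ε₂ + 2 * ε₃ + ε₃ ^ 2))
    (hγ₂ : γ₂ = 2 * εA + εA ^ 2 + (1 + εA) ^ 2 * (ε₁ + (1 + ε₁) * ε₂))
    (hsmall : kappa A ^ 2 * γ₂ < 1)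
    (hchol : Ghat + E₂ = Rhatᵀ * Rhat)
    (hQ : Qhat * Rhat = (A + E) + E₃) :
    spec ((1 : Matrix (Fin n) (Fin n) ℝ) - Qhatᵀ * Qhat) ≤
      kappa A ^ 2 * γ₁ / (1 - kappa A ^ 2 * γ₂) := by
  -- nonnegativity of the ε's
  have hεA0 : 0 ≤ εA := hεA ▸ div_nonneg (spec_nonneg E) (spec_nonneg A)
  have hε₁0 : 0 ≤ ε₁ := hε₁ ▸ div_nonneg (spec_nonneg E₁) (by positivity)
  have hε₂0 : 0 ≤ ε₂ := hε₂ ▸ div_nonneg (spec_nonneg E₂) (spec_nonneg Ghat)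
  have hε₃0 : 0 ≤ ε₃ := hε₃ ▸ div_nonneg (spec_nonneg E₃) (spec_nonneg (A + E))
  have hγ₁0 : 0 ≤ γ₁ := by rw [hγ₁]; positivity
  by_cases hn : 0 < n
  swap
  · -- degenerate case n = 0
    have hn0 : n = 0 := Nat.eq_zero_of_not_pos hn
    subst hn0
    have hk : kappa A = 1 := by rw [kappa]; exact dif_neg (lt_irrefl 0)
    have hz : spec ((1 : Matrix (Fin 0) (Fin 0) ℝ) - Qhatᵀ * Qhat) = 0 := by
      have hLHS : ((1 : Matrix (Fin 0) (Fin 0) ℝ) - Qhatᵀ * Qhat) = 0 := Subsingleton.elim _ _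
      rw [hLHS, spec_eq]; exact norm_zero
    rw [hk] at hsmall
    rw [hz, hk]
    apply div_nonneg (by nlinarith) (by nlinarith)
  -- main case
  set α := spec A with hα
  set s := sigmaMin A with hs
  have hspos : 0 < s := sigmaMin_pos A hn hA
  have hκ : kappa A = α / s := kappa_eq A hn
  have hsα : s ≤ α := sigmaMin_le_spec A hn
  have hαpos : 0 < α := lt_of_lt_of_le hspos hsα
  have hκ1 : 1 ≤ kappa A := by rw [hκ]; rw [le_div_iff₀ hspos]; linarith
  have hγ₂0 : 0 ≤ γ₂ := by rw [hγ₂]; positivity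
  have hκsq : 1 ≤ kappa A ^ 2 := by nlinarith [hκ1]
  have hγ₂1 : γ₂ < 1 := by linarith [mul_le_mul_of_nonneg_right hκsq hγ₂0]
  have hone_le : (1:ℝ) ≤ (1 + εA) ^ 2 := by
    have e : (1 + εA) ^ 2 = 1 + 2 * εA + εA ^ 2 := by ring
    linarith [sq_nonneg εA, e ▸ le_refl ((1 + εA) ^ 2)]
  have hrest0 : (0:ℝ) ≤ ε₁ + (1 + ε₁) * ε₂ := by positivity
  have hεA1 : εA < 1 := by
    have h0 : 0 ≤ (1 + εA) ^ 2 * (ε₁ + (1 + ε₁) * ε₂) := by positivity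
    linarith [sq_nonneg εA]
  have hε₁1 : ε₁ < 1 := by
    have hmono : ε₁ + (1 + ε₁) * ε₂ ≤ (1 + εA) ^ 2 * (ε₁ + (1 + ε₁) * ε₂) :=
      le_mul_of_one_le_left hrest0 hone_le
    have h1 : (0:ℝ) ≤ (1 + ε₁) * ε₂ := by positivity
    linarith [sq_nonneg εA, hmono]
  have hα0 : α ≠ 0 := ne_of_gt hαpos
  have hE : spec E = εA * α := by rw [hεA]; field_simp
  set β := spec (A + E) with hβ
  have hβu : β ≤ (1 + εA) * α := by
    have := spec_add_le A E
    rw [hE] at this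
    calc β ≤ α + εA * α := this
      _ = (1 + εA) * α := by ring
  have hβl : (1 - εA) * α ≤ β := by
    have h1 : A = (A + E) + (-E) := by abel
    have h2 : spec A ≤ spec (A + E) + spec (-E) := by
      conv_lhs => rw [h1]
      exact spec_add_le _ _
    rw [spec_neg, hE] at h2
    linarith [h2]
  have hβpos : 0 < β := lt_of_lt_of_le (mul_pos (by linarith) hαpos) hβl
  have hE₁sp : spec E₁ = ε₁ * β ^ 2 := by rw [hε₁]; field_simp
  have hE₃sp : spec E₃ = ε₃ * β := by rw [hε₃]; field_simp
  have hBB : spec ((A + E)ᵀ * (A + E)) = β ^ 2 := spec_transpose_mul_self _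
  have hGu : spec Ghat ≤ (1 + ε₁) * β ^ 2 := by
    rw [hG]
    calc spec ((A + E)ᵀ * (A + E) + E₁) ≤ spec ((A + E)ᵀ * (A + E)) + spec E₁ := spec_add_le _ _
      _ = β ^ 2 + ε₁ * β ^ 2 := by rw [hBB, hE₁sp]
      _ = (1 + ε₁) * β ^ 2 := by ring
  have hE₂sp : spec E₂ ≤ ε₂ * ((1 + ε₁) * β ^ 2) := by
    have hGl : (1 - ε₁) * β ^ 2 ≤ spec Ghat := by
      have h1 : (A + E)ᵀ * (A + E) = Ghat + (-E₁) := by rw [hG]; abel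
      have h2 : spec ((A + E)ᵀ * (A + E)) ≤ spec Ghat + spec (-E₁) := by
        conv_lhs => rw [h1]
        exact spec_add_le _ _
      rw [spec_neg, hE₁sp, hBB] at h2
      linarith
    have hGpos : 0 < spec Ghat :=
      lt_of_lt_of_le (mul_pos (by linarith) (by positivity)) hGl
    have : spec E₂ = ε₂ * spec Ghat := by rw [hε₂]; field_simp
    rw [this]
    exact mul_le_mul_of_nonneg_left hGu hε₂0
  have hβsq : β ^ 2 ≤ (1 + εA) ^ 2 * α ^ 2 := by
    have h := pow_le_pow_left₀ (spec_nonneg (A + E)) hβu 2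
    calc β ^ 2 ≤ ((1 + εA) * α) ^ 2 := h
      _ = (1 + εA) ^ 2 * α ^ 2 := by ring
  -- the R̂ᵀR̂ identity
  have hRR : Rhatᵀ * Rhat = (A + E)ᵀ * (A + E) + E₁ + E₂ := by
    rw [← hchol, hG]
  -- Δ bound
  set Δ := Rhatᵀ * Rhat - Aᵀ * A with hΔdef
  have hΔeq : Δ = Aᵀ * E + Eᵀ * A + Eᵀ * E + E₁ + E₂ := by
    rw [hΔdef, hRR, Matrix.transpose_add, Matrix.add_mul, Matrix.mul_add, Matrix.mul_add]
    abel
  have hΔ : spec Δ ≤ α ^ 2 * γ₂ := by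
    rw [hΔeq]
    have h1 : spec (Aᵀ * E) ≤ α * (εA * α) := by
      calc spec (Aᵀ * E) ≤ spec Aᵀ * spec E := spec_mul_le _ _
        _ = α * (εA * α) := by rw [spec_transpose, hE]
    have h2 : spec (Eᵀ * A) ≤ εA * α * α := by
      calc spec (Eᵀ * A) ≤ spec Eᵀ * spec A := spec_mul_le _ _
        _ = εA * α * α := by rw [spec_transpose, hE]
    have h3 : spec (Eᵀ * E) ≤ εA * α * (εA * α) := by
      calc spec (Eᵀ * E) ≤ spec Eᵀ * spec E := spec_mul_le _ _
        _ = εA * α * (εA * α) := by rw [spec_transpose, hE]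
    have h4 : spec E₁ ≤ ε₁ * ((1 + εA) ^ 2 * α ^ 2) := by
      rw [hE₁sp]; exact mul_le_mul_of_nonneg_left hβsq hε₁0
    have h5 : spec E₂ ≤ ε₂ * (1 + ε₁) * ((1 + εA) ^ 2 * α ^ 2) := by
      have h5' : (1 + ε₁) * β ^ 2 ≤ (1 + ε₁) * ((1 + εA) ^ 2 * α ^ 2) :=
        mul_le_mul_of_nonneg_left hβsq (by linarith)
      calc spec E₂ ≤ ε₂ * ((1 + ε₁) * β ^ 2) := hE₂sp
        _ ≤ ε₂ * ((1 + ε₁) * ((1 + εA) ^ 2 * α ^ 2)) := mul_le_mul_of_nonneg_left h5' hε₂0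
        _ = ε₂ * (1 + ε₁) * ((1 + εA) ^ 2 * α ^ 2) := by ring
    calc spec (Aᵀ * E + Eᵀ * A + Eᵀ * E + E₁ + E₂)
        ≤ spec (Aᵀ * E + Eᵀ * A + Eᵀ * E + E₁) + spec E₂ := spec_add_le _ _
      _ ≤ spec (Aᵀ * E + Eᵀ * A + Eᵀ * E) + spec E₁ + spec E₂ := by
          linarith [spec_add_le (Aᵀ * E + Eᵀ * A + Eᵀ * E) E₁]
      _ ≤ spec (Aᵀ * E + Eᵀ * A) + spec (Eᵀ * E) + spec E₁ + spec E₂ := by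
          linarith [spec_add_le (Aᵀ * E + Eᵀ * A) (Eᵀ * E)]
      _ ≤ spec (Aᵀ * E) + spec (Eᵀ * A) + spec (Eᵀ * E) + spec E₁ + spec E₂ := by
          linarith [spec_add_le (Aᵀ * E) (Eᵀ * A)]
      _ ≤ α ^ 2 * γ₂ := by
          have e3 : α * (εA * α) + εA * α * α + εA * α * (εA * α)
              + ε₁ * ((1 + εA) ^ 2 * α ^ 2) + ε₂ * (1 + ε₁) * ((1 + εA) ^ 2 * α ^ 2)
              = α ^ 2 * γ₂ := by rw [hγ₂]; ring
          linarith [h1, h2, h3, h4, h5]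
  -- lower bound for the quadratic form of R̂ᵀR̂
  have hlow : ∀ x : Fin n → ℝ,
      (s ^ 2 - spec Δ) * dotProduct x x ≤ dotProduct x ((Rhatᵀ * Rhat) *ᵥ x) := by
    intro x
    have hsplit : dotProduct x ((Rhatᵀ * Rhat) *ᵥ x) =
        dotProduct x ((Aᵀ * A) *ᵥ x) + dotProduct x (Δ *ᵥ x) := by
      rw [hΔdef]
      rw [Matrix.sub_mulVec, dotProduct_sub]
      ring
    have h1 : s ^ 2 * dotProduct x x ≤ dotProduct x ((Aᵀ * A) *ᵥ x) :=
      rayleigh_lower (Matrix.isHermitian_transpose_mul_self A) (sigmaMin_sq_le_eig A hn) x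
    have h2 : -(spec Δ * dotProduct x x) ≤ dotProduct x (Δ *ᵥ x) := by
      have := abs_dot_mulVec_le Δ x
      linarith [neg_abs_le (dotProduct x (Δ *ᵥ x))]
    rw [hsplit]
    nlinarith
  set c := s ^ 2 - α ^ 2 * γ₂ with hc
  have hcpos : 0 < c := by
    have h1 : kappa A ^ 2 * γ₂ * s ^ 2 < 1 * s ^ 2 :=
      mul_lt_mul_of_pos_right hsmall (by positivity)
    have h2 : kappa A ^ 2 * s ^ 2 = α ^ 2 := by
      rw [hκ]; field_simp
    have h3 : α ^ 2 * γ₂ = kappa A ^ 2 * γ₂ * s ^ 2 := by rw [← h2]; ring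
    rw [hc]
    linarith [h1, h3]
  have hclow : ∀ x : Fin n → ℝ, c * dotProduct x x ≤ dotProduct x ((Rhatᵀ * Rhat) *ᵥ x) := by
    intro x
    have hd0 : 0 ≤ dotProduct x x := Finset.sum_nonneg fun i _ => mul_self_nonneg _
    have h2 : c ≤ s ^ 2 - spec Δ := by rw [hc]; linarith [hΔ]
    calc c * dotProduct x x ≤ (s ^ 2 - spec Δ) * dotProduct x x :=
          mul_le_mul_of_nonneg_right h2 hd0
      _ ≤ dotProduct x ((Rhatᵀ * Rhat) *ᵥ x) := hlow x
  -- invertibility of R̂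
  have hdot_self : ∀ x : Fin n → ℝ, dotProduct x ((Rhatᵀ * Rhat) *ᵥ x) =
      dotProduct (Rhat *ᵥ x) (Rhat *ᵥ x) := by
    intro x
    rw [← Matrix.mulVec_mulVec, Matrix.dotProduct_mulVec x Rhatᵀ, Matrix.vecMul_transpose]
  have hinj : Function.Injective (Rhat.mulVec) := by
    have hker : ∀ x : Fin n → ℝ, Rhat *ᵥ x = 0 → x = 0 := by
      intro x hx
      have h1 := hclow x
      rw [hdot_self x, hx] at h1
      simp only [dotProduct_zero] at h1
      have hd0 : 0 ≤ dotProduct x x := Finset.sum_nonneg fun i _ => mul_self_nonneg _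
      have hdle : dotProduct x x ≤ 0 := by
        rcases le_or_gt (dotProduct x x) 0 with h | h
        · exact h
        · exact absurd h1 (not_le.mpr (mul_pos hcpos h))
      exact dotProduct_self_eq_zero.mp (le_antisymm hdle hd0)
    intro x y hxy
    have hsub : Rhat *ᵥ (x - y) = 0 := by
      rw [Matrix.mulVec_sub, hxy, sub_self]
    exact sub_eq_zero.mp (hker _ hsub)
  have hunit : IsUnit Rhat := Matrix.mulVec_injective_iff_isUnit.mp hinj
  have hudet : IsUnit Rhat.det := (Matrix.isUnit_iff_isUnit_det _).mp hunit
  have hRinv : Rhat * Rhat⁻¹ = 1 := Matrix.mul_nonsing_inv _ hudet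
  have hRinv' : Rhat⁻¹ * Rhat = 1 := Matrix.nonsing_inv_mul _ hudet
  -- bound on spec R̂⁻¹
  have hcs : Real.sqrt c > 0 := Real.sqrt_pos.mpr hcpos
  have hspecinv : spec Rhat⁻¹ ≤ 1 / Real.sqrt c := by
    apply spec_le_bound _ (by positivity)
    intro y
    set x' := mv Rhat⁻¹ y with hx'
    have hRx : mv Rhat x' = y := by
      simp only [hx', mv]
      simp [Matrix.mulVec_mulVec, hRinv, Matrix.one_mulVec, PiLp.coe_continuousLinearEquiv]
    have key : c * ‖x'‖ ^ 2 ≤ ‖y‖ ^ 2 := by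
      have h1 := hclow (EuclideanSpace.equiv (Fin n) ℝ x')
      rw [hdot_self] at h1
      have h2 : dotProduct (Rhat *ᵥ (EuclideanSpace.equiv (Fin n) ℝ x'))
          (Rhat *ᵥ (EuclideanSpace.equiv (Fin n) ℝ x')) = ‖mv Rhat x'‖ ^ 2 := by
        rw [mv_norm_sq, ← hdot_self]
      rw [h2, hRx] at h1
      have h3 : dotProduct (EuclideanSpace.equiv (Fin n) ℝ x')
          (EuclideanSpace.equiv (Fin n) ℝ x') = ‖x'‖ ^ 2 := (norm_sq_eucl x').symm
      rw [h3] at h1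
      exact h1
    have h4 : (Real.sqrt c * ‖x'‖) ^ 2 ≤ ‖y‖ ^ 2 := by
      rw [mul_pow, Real.sq_sqrt hcpos.le]
      exact key
    have h5 : Real.sqrt c * ‖x'‖ ≤ ‖y‖ :=
      (pow_le_pow_iff_left₀ (by positivity) (norm_nonneg y) two_ne_zero).mp h4
    rw [div_mul_eq_mul_div, le_div_iff₀ hcs]
    linarith
  -- the key identity
  set D := E₁ + E₂ - (A + E)ᵀ * E₃ - E₃ᵀ * (A + E) - E₃ᵀ * E₃ with hDdef
  have hQhat : Qhat = ((A + E) + E₃) * Rhat⁻¹ := by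
    rw [← hQ, Matrix.mul_assoc, hRinv, Matrix.mul_one]
  have hid : (1 : Matrix (Fin n) (Fin n) ℝ) - Qhatᵀ * Qhat = Rhat⁻¹ᵀ * D * Rhat⁻¹ := by
    have h1 : Rhat⁻¹ᵀ * Rhatᵀ = 1 := by
      rw [← Matrix.transpose_mul, hRinv, Matrix.transpose_one]
    have hone : (1 : Matrix (Fin n) (Fin n) ℝ) = Rhat⁻¹ᵀ * (Rhatᵀ * Rhat) * Rhat⁻¹ := by
      have e : Rhat⁻¹ᵀ * (Rhatᵀ * Rhat) * Rhat⁻¹ = (Rhat⁻¹ᵀ * Rhatᵀ) * (Rhat * Rhat⁻¹) := by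
        rw [← Matrix.mul_assoc, Matrix.mul_assoc (Rhat⁻¹ᵀ * Rhatᵀ)]
      rw [e, h1, hRinv, Matrix.one_mul]
    have hQQ : Qhatᵀ * Qhat = Rhat⁻¹ᵀ * (((A + E) + E₃)ᵀ * ((A + E) + E₃)) * Rhat⁻¹ := by
      rw [hQhat, Matrix.transpose_mul]
      simp only [Matrix.mul_assoc]
    have hDD : Rhatᵀ * Rhat - ((A + E) + E₃)ᵀ * ((A + E) + E₃) = D := by
      rw [hRR, hDdef]
      simp only [Matrix.transpose_add, Matrix.add_mul, Matrix.mul_add]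
      abel
    conv_lhs => rw [hone, hQQ]
    rw [← Matrix.sub_mul, ← Matrix.mul_sub, hDD]
  -- bound on spec D
  have hD : spec D ≤ α ^ 2 * γ₁ := by
    have h1 : spec ((A + E)ᵀ * E₃) ≤ β * (ε₃ * β) := by
      calc spec ((A + E)ᵀ * E₃) ≤ spec (A + E)ᵀ * spec E₃ := spec_mul_le _ _
        _ = β * (ε₃ * β) := by rw [spec_transpose, hE₃sp]
    have h2 : spec (E₃ᵀ * (A + E)) ≤ ε₃ * β * β := by
      calc spec (E₃ᵀ * (A + E)) ≤ spec E₃ᵀ * spec (A + E) := spec_mul_le _ _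
        _ = ε₃ * β * β := by rw [spec_transpose, hE₃sp]
    have h3 : spec (E₃ᵀ * E₃) ≤ ε₃ * β * (ε₃ * β) := by
      calc spec (E₃ᵀ * E₃) ≤ spec E₃ᵀ * spec E₃ := spec_mul_le _ _
        _ = ε₃ * β * (ε₃ * β) := by rw [spec_transpose, hE₃sp]
    have hstep : spec D ≤ spec E₁ + spec E₂ + spec ((A + E)ᵀ * E₃) + spec (E₃ᵀ * (A + E))
        + spec (E₃ᵀ * E₃) := by
      rw [hDdef]
      have e1 : E₁ + E₂ - (A + E)ᵀ * E₃ - E₃ᵀ * (A + E) - E₃ᵀ * E₃ =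
          (((E₁ + E₂) + (-((A + E)ᵀ * E₃))) + (-(E₃ᵀ * (A + E)))) + (-(E₃ᵀ * E₃)) := by
        abel
      rw [e1]
      calc spec _ ≤ spec (((E₁ + E₂) + (-((A + E)ᵀ * E₃))) + (-(E₃ᵀ * (A + E))))
            + spec (-(E₃ᵀ * E₃)) := spec_add_le _ _
        _ ≤ spec ((E₁ + E₂) + (-((A + E)ᵀ * E₃))) + spec (-(E₃ᵀ * (A + E)))
            + spec (-(E₃ᵀ * E₃)) := by
              linarith [spec_add_le ((E₁ + E₂) + (-((A + E)ᵀ * E₃))) (-(E₃ᵀ * (A + E)))]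
        _ ≤ spec (E₁ + E₂) + spec (-((A + E)ᵀ * E₃)) + spec (-(E₃ᵀ * (A + E)))
            + spec (-(E₃ᵀ * E₃)) := by
              linarith [spec_add_le (E₁ + E₂) (-((A + E)ᵀ * E₃))]
        _ ≤ spec E₁ + spec E₂ + spec (-((A + E)ᵀ * E₃)) + spec (-(E₃ᵀ * (A + E)))
            + spec (-(E₃ᵀ * E₃)) := by linarith [spec_add_le E₁ E₂]
        _ = spec E₁ + spec E₂ + spec ((A + E)ᵀ * E₃) + spec (E₃ᵀ * (A + E))
            + spec (E₃ᵀ * E₃) := by rw [spec_neg, spec_neg, spec_neg]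
    have hsum : spec E₁ + spec E₂ + spec ((A + E)ᵀ * E₃) + spec (E₃ᵀ * (A + E))
        + spec (E₃ᵀ * E₃) ≤ (ε₁ + (1 + ε₁) * ε₂ + 2 * ε₃ + ε₃ ^ 2) * β ^ 2 := by
      have e2 : (ε₁ + (1 + ε₁) * ε₂ + 2 * ε₃ + ε₃ ^ 2) * β ^ 2 =
          ε₁ * β ^ 2 + ε₂ * ((1 + ε₁) * β ^ 2) + β * (ε₃ * β) + ε₃ * β * β
          + ε₃ * β * (ε₃ * β) := by ring
      rw [hE₁sp, e2]
      linarith [hE₂sp, h1, h2, h3]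
    have hsum0 : (0:ℝ) ≤ ε₁ + (1 + ε₁) * ε₂ + 2 * ε₃ + ε₃ ^ 2 := by positivity
    have hfin : (ε₁ + (1 + ε₁) * ε₂ + 2 * ε₃ + ε₃ ^ 2) * β ^ 2 ≤ α ^ 2 * γ₁ := by
      calc (ε₁ + (1 + ε₁) * ε₂ + 2 * ε₃ + ε₃ ^ 2) * β ^ 2
          ≤ (ε₁ + (1 + ε₁) * ε₂ + 2 * ε₃ + ε₃ ^ 2) * ((1 + εA) ^ 2 * α ^ 2) :=
            mul_le_mul_of_nonneg_left hβsq hsum0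
        _ = α ^ 2 * γ₁ := by rw [hγ₁]; ring
    linarith
  -- final assembly
  have hfinal : spec ((1 : Matrix (Fin n) (Fin n) ℝ) - Qhatᵀ * Qhat) ≤ α ^ 2 * γ₁ / c := by
    rw [hid]
    have h1 : spec (Rhat⁻¹ᵀ * D * Rhat⁻¹) ≤ spec Rhat⁻¹ * spec D * spec Rhat⁻¹ := by
      calc spec (Rhat⁻¹ᵀ * D * Rhat⁻¹) ≤ spec (Rhat⁻¹ᵀ * D) * spec Rhat⁻¹ := spec_mul_le _ _
        _ ≤ spec Rhat⁻¹ᵀ * spec D * spec Rhat⁻¹ :=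
            mul_le_mul_of_nonneg_right (spec_mul_le _ _) (spec_nonneg _)
        _ = spec Rhat⁻¹ * spec D * spec Rhat⁻¹ := by rw [spec_transpose]
    have h2 : spec Rhat⁻¹ * spec D * spec Rhat⁻¹ ≤ (1 / Real.sqrt c) * (α ^ 2 * γ₁)
        * (1 / Real.sqrt c) := by
      have hq0 : (0:ℝ) ≤ 1 / Real.sqrt c := by positivity
      have ha : spec Rhat⁻¹ * spec D ≤ (1 / Real.sqrt c) * (α ^ 2 * γ₁) :=
        mul_le_mul hspecinv hD (spec_nonneg D) hq0
      exact mul_le_mul ha hspecinv (spec_nonneg _) (by positivity)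
    have h3 : (1 / Real.sqrt c) * (α ^ 2 * γ₁) * (1 / Real.sqrt c) = α ^ 2 * γ₁ / c := by
      calc (1 / Real.sqrt c) * (α ^ 2 * γ₁) * (1 / Real.sqrt c)
          = (α ^ 2 * γ₁) / (Real.sqrt c * Real.sqrt c) := by ring
        _ = α ^ 2 * γ₁ / c := by rw [Real.mul_self_sqrt hcpos.le]
    linarith
  have heq : α ^ 2 * γ₁ / c = kappa A ^ 2 * γ₁ / (1 - kappa A ^ 2 * γ₂) := by
    rw [hκ, hc]
    have hs0 : s ≠ 0 := ne_of_gt hspos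
    have hden : s ^ 2 - α ^ 2 * γ₂ ≠ 0 := by rw [← hc]; exact ne_of_gt hcpos
    field_simp
  rw [← heq]
  exact hfinal
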